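/- arXiv:1301.3972 — 3 statements merged into one kernel-verified Lean document; each statement's English description precedes it below -/
import Mathlib

section
/- Let G be a group, H a normal subgroup of G, and T a finite Z[G/H]-module. Then there is a finitely generated free Z[G/H]-module A and a surjective Z[G/H]-module homomorphism A → T whose kernel A₁ is, as an abelian group, free of the same finite rank as A. -/
open Submodule Finsupp

/-- A submodule of finite index in a free module over a PID is free. -/
theorem free_of_finite_quotient
    {R M : Type*} [CommRing R] [IsDomain R] [IsPrincipalIdealRing R]
    [AddCommGroup M] [Module R M] [Module.Free R M]
    (N : Submodule R M) [Finite (M ⧸ N)] :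
    Module.Free R N := by
  classical
  haveI : Fintype (M ⧸ N) := Fintype.ofFinite _
  set b := Module.Free.chooseBasis R M with hb
  set ι := Module.Free.ChooseBasisIndex R M
  have hsur := N.mkQ_surjective
  set m : (M ⧸ N) → M := fun q => (hsur q).choose with hm
  have hmk : ∀ q, N.mkQ (m q) = q := fun q => (hsur q).choose_spec
  set S : Finset ι := Finset.univ.biUnion (fun q : M ⧸ N => (b.repr (m q)).support) with hS
  set p : Submodule R (ι →₀ R) := Finsupp.supported R R (↑S) with hp
  set F₁ : Submodule R M := p.comap (b.repr : M →ₗ[R] (ι →₀ R)) with hF₁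
  -- F₁ ⊔ N = ⊤
  have hsup : F₁ ⊔ N = ⊤ := by
    rw [eq_top_iff]
    intro x _
    have hmem : m (N.mkQ x) ∈ F₁ := by
      simp only [hF₁, mem_comap, hp, Finsupp.mem_supported, LinearEquiv.coe_coe]
      intro i hi
      simp only [hS, Finset.coe_biUnion, Finset.mem_coe, Finset.mem_biUnion]
      exact Set.mem_iUnion.2 ⟨N.mkQ x, Set.mem_iUnion.2 ⟨Finset.mem_univ _, hi⟩⟩
    have hxn : x - m (N.mkQ x) ∈ N := by
      rw [← Submodule.Quotient.mk_eq_zero N]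
      have : N.mkQ (x - m (N.mkQ x)) = N.mkQ x - N.mkQ (m (N.mkQ x)) := map_sub _ _ _
      simpa [hmk] using this
    have hx : x = m (N.mkQ x) + (x - m (N.mkQ x)) := by abel
    rw [hx]
    exact add_mem_sup hmem hxn
  -- M ⧸ F₁ is free
  have hcompl : IsCompl p (Finsupp.supported R R ((↑S : Set ι)ᶜ)) := by
    constructor
    · exact Finsupp.disjoint_supported_supported disjoint_compl_right
    · rw [codisjoint_iff, hp, ← Finsupp.supported_union, Set.union_compl_self,
        Finsupp.supported_univ]
  have e₁ : (M ⧸ F₁) ≃ₗ[R] ((ι →₀ R) ⧸ p) :=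
    Submodule.Quotient.equiv F₁ p (b.repr) (by
      ext x
      simp only [Submodule.mem_map, hF₁, mem_comap]
      constructor
      · rintro ⟨y, hy, rfl⟩; simpa using hy
      · intro hx; exact ⟨b.repr.symm x, by simpa using hx, by simp⟩)
  have e₂ : ((ι →₀ R) ⧸ p) ≃ₗ[R] (Finsupp.supported R R ((↑S : Set ι)ᶜ)) :=
    Submodule.quotientEquivOfIsCompl _ _ hcompl
  have e₃ := Finsupp.supportedEquivFinsupp (M := R) (R := R) ((↑S : Set ι)ᶜ)
  haveI hfreeQ : Module.Free R (M ⧸ F₁) :=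
    Module.Free.of_equiv (e₁.trans (e₂.trans e₃)).symm
  -- the projection N → M ⧸ F₁
  set φ : N →ₗ[R] (M ⧸ F₁) := F₁.mkQ.comp N.subtype with hφ
  have hφsurj : Function.Surjective φ := by
    intro x
    obtain ⟨y, rfl⟩ := F₁.mkQ_surjective x
    have hy : y ∈ F₁ ⊔ N := hsup ▸ mem_top
    obtain ⟨a, ha, c, hc, rfl⟩ := mem_sup.1 hy
    refine ⟨⟨c, hc⟩, ?_⟩
    show (Submodule.Quotient.mk c : M ⧸ F₁) = Submodule.Quotient.mk (a + c)
    rw [Submodule.Quotient.eq F₁]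
    simpa using neg_mem ha
  have hker : LinearMap.ker φ = F₁.comap N.subtype := by
    rw [hφ, LinearMap.ker_comp, Submodule.ker_mkQ]
  -- the kernel is free (finitely generated torsion free over a PID)
  have hkerKeq : F₁.comap N.subtype = (N ⊓ F₁).comap N.subtype := by
    ext x; simp
  have eker : (LinearMap.ker φ) ≃ₗ[R] ↥(N ⊓ F₁) := by
    rw [hker, hkerKeq]
    exact Submodule.comapSubtypeEquivOfLe inf_le_left
  have eK₁ : ↥((N ⊓ F₁).comap F₁.subtype) ≃ₗ[R] ↥(N ⊓ F₁) :=
    Submodule.comapSubtypeEquivOfLe inf_le_right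
  -- F₁ is finitely generated
  have hF₁fg : F₁.FG := by
    have hpfg : p.FG := by
      rw [hp, Finsupp.supported_eq_span_single]
      exact Submodule.fg_span ((S : Set ι).toFinite.image _)
    have hmapeq : F₁ = p.map (b.repr.symm : (ι →₀ R) →ₗ[R] M) := by
      rw [hF₁]
      ext x
      simp only [mem_comap, Submodule.mem_map, LinearEquiv.coe_coe]
      constructor
      · intro h; exact ⟨b.repr x, h, by simp⟩
      · rintro ⟨y, hy, rfl⟩; simpa using hy
    rw [hmapeq]
    exact Submodule.FG.map _ hpfg
  haveI : Module.Finite R F₁ := Module.Finite.iff_fg.2 hF₁fg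
  haveI : IsNoetherian R F₁ := isNoetherian_of_isNoetherianRing_of_finite R F₁
  haveI : Module.Finite R ((N ⊓ F₁).comap F₁.subtype) :=
    Module.Finite.iff_fg.2 (IsNoetherian.noetherian _)
  haveI : Module.Free R ((N ⊓ F₁).comap F₁.subtype) :=
    Module.free_of_finite_type_torsion_free'
  haveI hfreeker : Module.Free R (LinearMap.ker φ) :=
    Module.Free.of_equiv (eK₁.trans eker.symm)
  -- split the exact sequence
  obtain ⟨σ, hσ⟩ := Module.projective_lifting_property φ LinearMap.id hφsurj
  have efinal : ((LinearMap.ker φ) × (M ⧸ F₁)) ≃ₗ[R] N :=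
    lequivProdOfRightSplitExact (Submodule.injective_subtype (LinearMap.ker φ))
      (Submodule.range_subtype _) hσ
  exact Module.Free.of_equiv efinal

/-- Let `G` be a group, `H` a normal subgroup and `T` a finite
`ℤ[G/H]`-module.  Then there is a finitely generated free `ℤ[G/H]`-module `A`
(modelled as `Fin n → ℤ[G/H]`) and a surjective `ℤ[G/H]`-linear map `A → T` whose
kernel is, as an abelian group, free of the same rank as `A`. -/
theorem finite_module_surjection_from_free
    (G : Type*) [Group G] (H : Subgroup G) [H.Normal]
    (T : Type*) [AddCommGroup T] [Module (MonoidAlgebra ℤ (G ⧸ H)) T] [Finite T] :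
    ∃ (n : ℕ)
      (f : (Fin n → MonoidAlgebra ℤ (G ⧸ H)) →ₗ[MonoidAlgebra ℤ (G ⧸ H)] T),
      Function.Surjective f ∧
      Module.Free ℤ (LinearMap.ker f) ∧
      Module.rank ℤ (LinearMap.ker f) =
        Module.rank ℤ (Fin n → MonoidAlgebra ℤ (G ⧸ H)) := by
  classical
  haveI : Module.Finite (MonoidAlgebra ℤ (G ⧸ H)) T := Module.Finite.of_finite
  obtain ⟨n, f, hf⟩ := Module.Finite.exists_fin' (MonoidAlgebra ℤ (G ⧸ H)) T
  refine ⟨n, f, hf, ?_⟩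
  set R := MonoidAlgebra ℤ (G ⧸ H) with hR
  set F := (Fin n → R) with hFdef
  haveI : Module.Free ℤ R := Module.Free.of_basis (MonoidAlgebra.basis (G ⧸ H) ℤ)
  haveI : Module.Free ℤ F := Module.Free.pi _ _
  set g : F →ₗ[ℤ] T := f.restrictScalars ℤ with hg
  have hgs : Function.Surjective g := hf
  haveI hfinq : Finite (F ⧸ LinearMap.ker g) :=
    Finite.of_equiv T (g.quotKerEquivOfSurjective hgs).symm.toEquiv
  have hkg : LinearMap.ker g = (LinearMap.ker f).restrictScalars ℤ :=
    LinearMap.ker_restrictScalars ℤ f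
  haveI hfinq' : Finite (F ⧸ (LinearMap.ker f).restrictScalars ℤ) := hkg ▸ hfinq
  haveI hfree : Module.Free ℤ ((LinearMap.ker f).restrictScalars ℤ) :=
    free_of_finite_quotient _
  have e : ((LinearMap.ker f).restrictScalars ℤ) ≃ₗ[ℤ] (LinearMap.ker f) :=
    (Submodule.restrictScalarsEquiv ℤ R F (LinearMap.ker f)).restrictScalars ℤ
  refine ⟨Module.Free.of_equiv e, ?_⟩
  have hq0 : Module.rank ℤ (F ⧸ (LinearMap.ker f).restrictScalars ℤ) = 0 := by
    rw [rank_eq_zero_iff]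
    intro x
    refine ⟨(Nat.card (F ⧸ (LinearMap.ker f).restrictScalars ℤ) : ℤ), ?_, ?_⟩
    · exact_mod_cast Nat.card_pos.ne'
    · rw [natCast_zsmul]
      exact card_nsmul_eq_zero'
  have h1 := rank_quotient_add_rank_of_isDomain (R := ℤ)
    ((LinearMap.ker f).restrictScalars ℤ)
  rw [hq0, zero_add] at h1
  rw [← e.rank_eq]
  exact h1
end

section
/- Let k be a field and N a finitely generated module over the Laurent polynomial ring k[t, t⁻¹] on which t − 1 acts invertibly (i.e., multiplication by t − 1 is a bijection N → N). Then N is finite-dimensional as a k-vector space. -/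
set_option maxHeartbeats 1000000

open LaurentPolynomial Polynomial in
private lemma laurent_domain (k : Type*) [Field k] : IsDomain (LaurentPolynomial k) :=
  NoZeroDivisors.to_isDomain _

open LaurentPolynomial Polynomial in
private lemma laurent_pid (k : Type*) [Field k] : IsPrincipalIdealRing (LaurentPolynomial k) := by
  haveI := LaurentPolynomial.isLocalization (R := k)
  constructor
  intro I
  obtain ⟨a, ha⟩ := (inferInstance : IsPrincipalIdealRing k[X]).principal
    (Ideal.comap (algebraMap k[X] (LaurentPolynomial k)) I)
  refine ⟨algebraMap k[X] _ a, ?_⟩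
  have := IsLocalization.map_comap (Submonoid.powers (X : k[X])) (LaurentPolynomial k) I
  rw [← this, Ideal.under_def, ha]
  simp [Ideal.map_span, Ideal.submodule_span_eq]

open LaurentPolynomial Polynomial in
private lemma tsubone_not_unit (k : Type*) [Field k] :
    ¬ IsUnit (T 1 - 1 : LaurentPolynomial k) := by
  haveI := LaurentPolynomial.isLocalization (R := k)
  have hg : ∀ y : Submonoid.powers (X : k[X]), IsUnit ((Polynomial.evalRingHom (1:k)) y) := by
    rintro ⟨y, n, rfl⟩
    simp [isUnit_iff_ne_zero]
  set φ := IsLocalization.lift (M := Submonoid.powers (X : k[X]))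
    (S := LaurentPolynomial k) hg with hφ
  intro h
  have h1 : φ (T 1) = 1 := by
    rw [← Polynomial.toLaurent_X, ← algebraMap_eq_toLaurent, IsLocalization.lift_eq]
    simp
  have : φ (T 1 - 1) = 0 := by rw [map_sub, h1, map_one, sub_self]
  exact not_isUnit_zero (this ▸ h.map φ)

open LaurentPolynomial Polynomial in
private lemma aeval_mk_T (k : Type*) [Field k] (I : Ideal (LaurentPolynomial k)) (p : k[X]) :
    Polynomial.aeval ((Ideal.Quotient.mk I) (T 1)) p
      = Ideal.Quotient.mk I (Polynomial.toLaurent p) := by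
  have : (Polynomial.aeval ((Ideal.Quotient.mk I) (T 1)) : k[X] →ₐ[k] _)
      = (Ideal.Quotient.mkₐ k I).comp Polynomial.toLaurentAlg := by
    apply Polynomial.algHom_ext
    simp [Polynomial.toLaurentAlg_apply]
  exact DFunLike.congr_fun this p

open Polynomial in
noncomputable def AdjoinRoot.liftHom {R S : Type*} [CommRing R] [CommRing S] [Algebra R S]
    (f : R[X]) (x : S) (hfx : aeval x f = 0) : AdjoinRoot f →ₐ[R] S :=
  AdjoinRoot.liftAlgHom f (Algebra.ofId R S) x hfx

open Polynomial in
theorem AdjoinRoot.liftHom_mk {R S : Type*} [CommRing R] [CommRing S] [Algebra R S]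
    {f : R[X]} {x : S} {hfx : aeval x f = 0} {g : R[X]} :
    AdjoinRoot.liftHom f x hfx (AdjoinRoot.mk f g) = aeval x g :=
  rfl

open LaurentPolynomial Polynomial in
private lemma finite_quot (k : Type*) [Field k] (g : k[X]) (hg : g ≠ 0) :
    Module.Finite k (LaurentPolynomial k ⧸ Ideal.span {Polynomial.toLaurent g}) := by
  set I : Ideal (LaurentPolynomial k) := Ideal.span {Polynomial.toLaurent g} with hI
  let π : LaurentPolynomial k →+* (LaurentPolynomial k ⧸ I) := Ideal.Quotient.mk I
  have hg0 : π (Polynomial.toLaurent g) = 0 :=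
    Ideal.Quotient.eq_zero_iff_mem.mpr (Ideal.subset_span rfl)
  have hgx : Polynomial.aeval (π (T 1)) g = 0 := by rw [aeval_mk_T]; exact hg0
  set F := AdjoinRoot.liftHom g (π (T 1)) hgx with hF
  have hts : π (T 1) * π (T (-1)) = 1 := by
    rw [← map_mul, ← T_add]
    norm_num
  obtain ⟨q, hq, hqd⟩ := g.exists_eq_pow_rootMultiplicity_mul_and_not_dvd hg 0
  rw [map_zero, sub_zero] at hq hqd
  have hc : q.coeff 0 ≠ 0 := fun h => hqd (Polynomial.X_dvd_iff.mpr h)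
  have hgq : Polynomial.toLaurent g = T (g.rootMultiplicity 0) * Polynomial.toLaurent q := by
    conv_lhs => rw [hq]
    rw [map_mul, Polynomial.toLaurent_X_pow]
  have hq0 : π (Polynomial.toLaurent q) = 0 := by
    have h4 : Polynomial.toLaurent q
        = T (-(g.rootMultiplicity 0 : ℤ)) * Polynomial.toLaurent g := by
      rw [hgq, ← mul_assoc, ← T_add]
      simp
    rw [h4, map_mul, hg0, mul_zero]
  have h2 : π (Polynomial.toLaurent q) = π (Polynomial.toLaurent q.divX) * π (T 1)
      + algebraMap k _ (q.coeff 0) := by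
    conv_lhs => rw [← q.divX_mul_X_add]
    simp only [map_add, map_mul, Polynomial.toLaurent_X, Polynomial.toLaurent_C]
    rw [LaurentPolynomial.C_eq_algebraMap,
      IsScalarTower.algebraMap_apply k (LaurentPolynomial k) (LaurentPolynomial k ⧸ I),
      Ideal.Quotient.algebraMap_eq]
  have e1 : π (Polynomial.toLaurent q.divX) + algebraMap k _ (q.coeff 0) * π (T (-1)) = 0 := by
    have h0 : (π (Polynomial.toLaurent q.divX) * π (T 1) + algebraMap k _ (q.coeff 0)) * π (T (-1)) = 0 := by
      rw [← h2, hq0, zero_mul]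
    rw [add_mul, mul_assoc, hts, mul_one] at h0
    exact h0
  have e2 : algebraMap k _ (q.coeff 0) * π (T (-1)) = - π (Polynomial.toLaurent q.divX) :=
    eq_neg_of_add_eq_zero_right e1
  have hcu : algebraMap k (LaurentPolynomial k ⧸ I) (-(q.coeff 0)⁻¹) * algebraMap k _ (q.coeff 0) = -1 := by
    rw [← map_mul, neg_mul, inv_mul_cancel₀ hc, map_neg, map_one]
  have h3 : π (T (-1)) = algebraMap k _ (-(q.coeff 0)⁻¹) * π (Polynomial.toLaurent q.divX) :=
    calc π (T (-1))
        = -(algebraMap k _ (-(q.coeff 0)⁻¹) * (algebraMap k _ (q.coeff 0) * π (T (-1)))) := by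
          rw [← mul_assoc, hcu]; ring
      _ = -(algebraMap k _ (-(q.coeff 0)⁻¹) * (- π (Polynomial.toLaurent q.divX))) := by rw [e2]
      _ = algebraMap k _ (-(q.coeff 0)⁻¹) * π (Polynomial.toLaurent q.divX) := by ring
  have hTm1 : π (T (-1)) = F (AdjoinRoot.mk g (Polynomial.C (-(q.coeff 0)⁻¹) * q.divX)) := by
    rw [hF, AdjoinRoot.liftHom_mk, map_mul, Polynomial.aeval_C, aeval_mk_T, h3]
  have key : ∀ f : LaurentPolynomial k, ∃ p : k[X], π f = F (AdjoinRoot.mk g p) := by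
    intro f
    induction f using LaurentPolynomial.reduce_to_polynomial_of_mul_T with
    | Qf p => exact ⟨p, by rw [hF, AdjoinRoot.liftHom_mk, aeval_mk_T]⟩
    | QT f hf =>
      obtain ⟨p, hp⟩ := hf
      refine ⟨p * (Polynomial.C (-(q.coeff 0)⁻¹) * q.divX), ?_⟩
      have h5 : π f = π (f * T 1) * π (T (-1)) := by
        rw [← map_mul, mul_T_assoc]
        norm_num
      rw [h5, hp, hTm1, ← map_mul, ← map_mul]
  haveI : Module.Finite k (AdjoinRoot g) := (AdjoinRoot.powerBasis hg).finite
  apply Module.Finite.of_surjective (F.toLinearMap)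
  intro a
  obtain ⟨f, rfl⟩ := Ideal.Quotient.mk_surjective a
  obtain ⟨p, hp⟩ := key f
  exact ⟨AdjoinRoot.mk g p, hp.symm⟩

open LaurentPolynomial in
private lemma laurent_torsion_of_bij
    (k : Type*) [Field k]
    (N : Type*) [AddCommGroup N] [Module (LaurentPolynomial k) N]
    (hfg : Module.Finite (LaurentPolynomial k) N)
    (hsurj : Function.Surjective fun x : N => (T 1 - 1 : LaurentPolynomial k) • x) :
    Module.IsTorsion (LaurentPolynomial k) N := by
  haveI := hfg
  haveI := laurent_domain k
  haveI := laurent_pid k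
  have hnu := tsubone_not_unit k
  set R := LaurentPolynomial k
  set M' := N ⧸ Submodule.torsion R N
  haveI : Module.Finite R M' := Module.Finite.quotient R _
  haveI : Module.IsTorsionFree R M' := Submodule.QuotientTorsion.instIsTorsionFree
  haveI : Module.Free R M' := Module.free_of_finite_type_torsion_free'
  set b := Module.Free.chooseBasis R M'
  by_cases hne : Nonempty (Module.Free.ChooseBasisIndex R M')
  · exfalso
    obtain ⟨i⟩ := hne
    obtain ⟨y, hy⟩ := (Submodule.torsion R N).mkQ_surjective (b i)
    obtain ⟨z, hz⟩ := hsurj y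
    simp only at hz
    have : (T 1 - 1 : R) • ((Submodule.torsion R N).mkQ z) = b i := by
      rw [← map_smul, hz, hy]
    have h1 : (T 1 - 1 : R) * (b.repr ((Submodule.torsion R N).mkQ z)) i = 1 := by
      have := congrArg (fun w => b.repr w i) this
      simpa using this
    exact hnu (IsUnit.of_mul_eq_one _ h1)
  · haveI : IsEmpty (Module.Free.ChooseBasisIndex R M') := not_nonempty_iff.mp hne
    have : Subsingleton M' := b.repr.toEquiv.subsingleton
    have htop : Submodule.torsion R N = ⊤ :=
      Submodule.Quotient.subsingleton_iff.mp this
    intro x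
    have : x ∈ Submodule.torsion R N := htop ▸ Submodule.mem_top
    exact this

/-- A finitely generated module over the Laurent polynomial ring `k[t,t⁻¹]`
(`k` a field) on which multiplication by `t - 1` is bijective is finite-dimensional
over `k`. -/
theorem finiteDimensional_of_tsubone_invertible
    (k : Type*) [Field k]
    (N : Type*) [AddCommGroup N] [Module k N] [Module (LaurentPolynomial k) N]
    [IsScalarTower k (LaurentPolynomial k) N]
    (hfg : Module.Finite (LaurentPolynomial k) N)
    (hbij : Function.Bijective fun x : N => (LaurentPolynomial.T 1 - 1 : LaurentPolynomial k) • x) :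
    FiniteDimensional k N := by
  haveI := hfg
  haveI := laurent_domain k
  have htor : Module.IsTorsion (LaurentPolynomial k) N :=
    laurent_torsion_of_bij k N hfg hbij.surjective
  -- a nonzero annihilating element
  have hne := Submodule.annihilator_top_inter_nonZeroDivisors htor
  obtain ⟨f, hf, hreg⟩ := hne
  -- replace f by a polynomial
  obtain ⟨n, g, hgf⟩ := LaurentPolynomial.exists_T_pow f
  have hg : g ≠ 0 := by
    rintro rfl
    rw [map_zero] at hgf
    rcases mul_eq_zero.mp hgf.symm with h | h
    · exact nonZeroDivisors.ne_zero hreg h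
    · exact (LaurentPolynomial.isUnit_T (n : ℤ)).ne_zero h
  have hann : ∀ x : N, (Polynomial.toLaurent g) • x = 0 := by
    intro x
    have hfx : f • x = 0 := Submodule.mem_annihilator.mp hf x Submodule.mem_top
    rw [hgf, mul_comm, mul_smul, hfx, smul_zero]
  set I : Ideal (LaurentPolynomial k) := Ideal.span {Polynomial.toLaurent g} with hI
  have hTors : Module.IsTorsionBySet (LaurentPolynomial k) N I := by
    rw [hI, ← Ideal.submodule_span_eq]
    exact (Module.isTorsionBySet_span_singleton_iff _).mpr hann
  letI : Module (LaurentPolynomial k ⧸ I) N := hTors.module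
  haveI : IsScalarTower k (LaurentPolynomial k ⧸ I) N := hTors.isScalarTower
  haveI : IsScalarTower (LaurentPolynomial k) (LaurentPolynomial k ⧸ I) N := hTors.isScalarTower
  haveI : Module.Finite (LaurentPolynomial k ⧸ I) N :=
    Module.Finite.of_restrictScalars_finite (LaurentPolynomial k) _ _
  haveI : Module.Finite k (LaurentPolynomial k ⧸ I) := finite_quot k g hg
  exact Module.Finite.trans (LaurentPolynomial k ⧸ I) N
end

section
/- Every nonzero finitely generated module over Z[t, t⁻¹] has a nontrivial finite quotient module. That is, if N is a finitely generated Z[t,t⁻¹]-module with N ≠ 0, then there exists a Z[t,t⁻¹]-submodule N' ⊊ N such that N/N' is a nonzero finite module. -/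
instance aux_addMonoidFG_int : AddMonoid.FG ℤ :=
  AddGroup.fg_iff_addMonoid_fg.mp (Module.Finite.iff_addGroup_fg.mp inferInstance)

instance aux_jacobson_int : IsJacobsonRing ℤ := by
  rw [isJacobsonRing_iff_prime_eq]
  intro P hP
  rcases eq_or_ne P ⊥ with rfl | hne
  · refine le_antisymm ?_ Ideal.le_jacobson
    intro x hx
    rw [Ideal.mem_bot]
    by_contra hx0
    obtain ⟨p, hplt, hp⟩ := Nat.exists_infinite_primes (x.natAbs + 1)
    have hpmax : (Ideal.span {(p : ℤ)}).IsMaximal :=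
      PrincipalIdealRing.isMaximal_of_irreducible
        (Int.prime_iff_natAbs_prime.mpr (by simpa using hp)).irreducible
    have hxp : x ∈ Ideal.span {(p : ℤ)} := by
      rw [Ideal.jacobson] at hx
      exact (Ideal.mem_sInf.mp hx) ⟨bot_le, hpmax⟩
    rw [Ideal.mem_span_singleton] at hxp
    have hdvd : p ∣ x.natAbs := by
      have := Int.natAbs_dvd_natAbs.mpr hxp
      simpa using this
    have := Nat.le_of_dvd (Int.natAbs_pos.mpr hx0) hdvd
    omega
  · have : P.IsMaximal := IsPrime.to_maximal_ideal hne
    exact Ideal.jacobson_eq_self_of_isMaximal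

/-- A field which is finite as a `ℤ`-module is finite. -/
lemma aux_field_finite_of_int (K : Type*) [Field K] [Module.Finite ℤ K] : Finite K := by
  have hint : Algebra.IsIntegral ℤ K := Algebra.IsIntegral.of_finite ℤ K
  haveI : CharP K (ringChar K) := ringChar.charP K
  rcases CharP.char_is_prime_or_zero K (ringChar K) with hp | h0
  · -- positive characteristic
    haveI : NeZero (ringChar K) := ⟨hp.ne_zero⟩
    letI : Algebra (ZMod (ringChar K)) K := ZMod.algebra _ _
    haveI : IsScalarTower ℤ (ZMod (ringChar K)) K := by
      refine IsScalarTower.of_algebraMap_smul fun r x => ?_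
      rw [Algebra.smul_def, ← IsScalarTower.algebraMap_apply, eq_intCast, zsmul_eq_mul]
    haveI : Module.Finite (ZMod (ringChar K)) K :=
      Module.Finite.of_restrictScalars_finite ℤ (ZMod (ringChar K)) K
    exact Module.finite_of_finite (ZMod (ringChar K))
  · -- characteristic zero is impossible
    haveI : CharP K 0 := h0 ▸ ringChar.charP K
    haveI : CharZero K := CharP.charP_to_charZero K
    have hx : IsIntegral ℤ (algebraMap ℚ K (1/2)) := hint.isIntegral _
    have h2 : IsIntegral ℤ ((1 : ℚ)/2) :=
      hx.tower_bot (algebraMap ℚ K).injective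
    obtain ⟨y, hy⟩ := IsIntegrallyClosed.isIntegral_iff.mp h2
    have : (y : ℚ) = 1/2 := hy
    have h2y : (y : ℚ) * 2 = 1 := by rw [this]; norm_num
    have : y * 2 = 1 := by exact_mod_cast h2y
    omega

/-- The quotient of `ℤ[t,t⁻¹]` by a maximal ideal is finite. -/
lemma aux_finite_quot (I : Ideal (LaurentPolynomial ℤ)) (hI : I.IsMaximal) :
    Finite (LaurentPolynomial ℤ ⧸ I) := by
  letI : Field (LaurentPolynomial ℤ ⧸ I) := Ideal.Quotient.field I
  haveI : Algebra.FiniteType ℤ (LaurentPolynomial ℤ) :=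
    AddMonoidAlgebra.finiteType_of_fg ℤ ℤ
  haveI : Algebra.FiniteType ℤ (LaurentPolynomial ℤ ⧸ I) :=
    Algebra.FiniteType.trans ‹_› (Algebra.FiniteType.of_surjective
      (Algebra.ofId (LaurentPolynomial ℤ) (LaurentPolynomial ℤ ⧸ I)) Ideal.Quotient.mk_surjective)
  haveI : Module.Finite ℤ (LaurentPolynomial ℤ ⧸ I) :=
    finite_of_finite_type_of_isJacobsonRing ℤ (LaurentPolynomial ℤ ⧸ I)
  exact aux_field_finite_of_int _

/-- Every nonzero finitely generated module over `ℤ[t,t⁻¹]` has a nontrivial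
finite quotient module. -/
theorem exists_finite_nontrivial_quotient
    (N : Type*) [AddCommGroup N] [Module (LaurentPolynomial ℤ) N]
    [Module.Finite (LaurentPolynomial ℤ) N] [Nontrivial N] :
    ∃ N' : Submodule (LaurentPolynomial ℤ) N,
      N' ≠ ⊤ ∧ Finite (N ⧸ N') ∧ Nontrivial (N ⧸ N') := by
  set R := LaurentPolynomial ℤ
  haveI : Algebra.FiniteType ℤ R := AddMonoidAlgebra.finiteType_of_fg ℤ ℤ
  haveI : IsNoetherianRing R := Algebra.FiniteType.isNoetherianRing ℤ R
  haveI : IsNoetherian R N := inferInstance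
  obtain ⟨M, hM, -⟩ := (eq_top_or_exists_le_coatom (⊥ : Submodule R N)).resolve_left bot_ne_top
  haveI : IsSimpleModule R (N ⧸ M) := isSimpleModule_iff_isCoatom.mpr hM
  obtain ⟨I, hImax, ⟨e⟩⟩ := isSimpleModule_iff_quot_maximal.mp ‹IsSimpleModule R (N ⧸ M)›
  haveI := aux_finite_quot I hImax
  exact ⟨M, hM.1, Finite.of_equiv _ e.symm.toEquiv, IsSimpleModule.nontrivial R _⟩
end
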